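/- Let G be a graph with chromatic colouring c and let t ≥ 1. Consider the generalised windmill W = K_1 + (G_1 ∪ ... ∪ G_t), the join of a single vertex w with t disjoint copies of G, coloured by using the same chromatic colouring on each copy of G and a new colour on w. Then a set F ⊆ V(W) is a fade set of W if and only if F ∩ V(G_i) is a fade set of G_i for each i and w ∉ F; hence the fading number of W equals t times the fading number of G with respect to c. -/

import Mathlib

/-- The closed neighbourhood of `u` as a finset. -/
def closedNbr {V : Type*} [Fintype V] [DecidableEq V] (G : SimpleGraph V)
    [DecidableRel G.Adj] (u : V) : Finset V :=
  insert u (G.neighborFinset u)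

/-- `u` yields a rainbow neighbourhood: `N[u]` meets every colour class. -/
def YieldsRainbow {V : Type*} [Fintype V] [DecidableEq V] (G : SimpleGraph V)
    [DecidableRel G.Adj] {k : ℕ} (c : V → Fin k) (u : V) : Prop :=
  ∀ i : Fin k, ∃ v ∈ closedNbr G u, c v = i

/-- `F` is a fade set: every rainbow-yielding vertex still sees every colour
on vertices outside `F`. -/
def IsFadeSet {V : Type*} [Fintype V] [DecidableEq V] (G : SimpleGraph V)
    [DecidableRel G.Adj] {k : ℕ} (c : V → Fin k) (F : Finset V) : Prop :=
  ∀ u : V, YieldsRainbow G c u →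
    ∀ i : Fin k, ∃ v ∈ closedNbr G u, c v = i ∧ v ∉ F

/-- The fading number: the maximum cardinality of a fade set. -/
noncomputable def fadingNumber {V : Type*} [Fintype V] [DecidableEq V]
    (G : SimpleGraph V) [DecidableRel G.Adj] {k : ℕ} (c : V → Fin k) : ℕ :=
  sSup {m | ∃ F : Finset V, IsFadeSet G c F ∧ F.card = m}

/-- The generalised windmill `K₁ + (G₁ ∪ ... ∪ G_t)`: `none` is the central
vertex `w` and `some (i, v)` is the vertex `v` of the `i`-th copy of `G`. -/
def windmill {V : Type*} (G : SimpleGraph V) (t : ℕ) :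
    SimpleGraph (Option (Fin t × V)) where
  Adj u v :=
    match u, v with
    | some p, some q => p.1 = q.1 ∧ G.Adj p.2 q.2
    | some _, none => True
    | none, some _ => True
    | none, none => False
  symm := by
    constructor
    intro u v h
    match u, v with
    | some p, some q => exact ⟨h.1.symm, G.adj_symm h.2⟩
    | some _, none => trivial
    | none, some _ => trivial
  loopless := by
    constructor
    intro u h
    match u with
    | some p => exact G.irrefl h.2
    | none => exact h

instance windmill.decAdj {V : Type*} (G : SimpleGraph V) (t : ℕ)
    [DecidableRel G.Adj] [DecidableEq V] : DecidableRel (windmill G t).Adj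
  | some p, some q => inferInstanceAs (Decidable (p.1 = q.1 ∧ G.Adj p.2 q.2))
  | some _, none => inferInstanceAs (Decidable True)
  | none, some _ => inferInstanceAs (Decidable True)
  | none, none => inferInstanceAs (Decidable False)

/-- The chromatic colouring of the windmill: each copy of `G` is coloured by
`c` and the central vertex gets the new colour `c_{χ(G)+1}`. -/
def windmillColour {V : Type*} {k : ℕ} (c : V → Fin k) (t : ℕ) :
    Option (Fin t × V) → Fin (k + 1) :=
  fun u => u.elim (Fin.last k) (fun p => (c p.2).castSucc)


set_option linter.unusedSectionVars false

section Aux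
variable {V : Type*} [Fintype V] [DecidableEq V] (G : SimpleGraph V)
    [DecidableRel G.Adj] {k : ℕ} (c : V → Fin k) {t : ℕ}

lemma mem_closedNbr {u v : V} : v ∈ closedNbr G u ↔ v = u ∨ G.Adj u v := by
  simp [closedNbr]

lemma chrom_aux (hchrom : G.chromaticNumber = k)
    (c' : V → Fin k) (hp' : ∀ u v : V, G.Adj u v → c' u ≠ c' v)
    (j : Fin k) (hj : ∀ v, c' v ≠ j) : False := by
  have C : G.Coloring {i : Fin k // i ≠ j} :=
    SimpleGraph.Coloring.mk (fun v => ⟨c' v, hj v⟩)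
      (fun {u v} h hce => hp' u v h (congrArg Subtype.val hce))
  have hle : G.chromaticNumber ≤ (Fintype.card {i : Fin k // i ≠ j} : ℕ) :=
    C.colorable.chromaticNumber_le
  have hcard : Fintype.card {i : Fin k // i ≠ j} = k - 1 := by
    simp [Fintype.card_subtype_compl]
  rw [hchrom, hcard] at hle
  have h1 : k ≤ k - 1 := by exact_mod_cast hle
  have h2 : 0 < k := j.pos
  omega

lemma c_surj (hproper : ∀ u v : V, G.Adj u v → c u ≠ c v)
    (hchrom : G.chromaticNumber = k) : Function.Surjective c := by
  intro j
  by_contra h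
  push_neg at h
  exact chrom_aux G hchrom c hproper j fun v => h v

lemma exists_rainbow (hproper : ∀ u v : V, G.Adj u v → c u ≠ c v)
    (hchrom : G.chromaticNumber = k) (hk : 1 ≤ k) :
    ∃ u : V, YieldsRainbow G c u := by
  by_contra h
  push_neg at h
  have h' : ∀ u : V, ∃ i : Fin k, ∀ v ∈ closedNbr G u, c v ≠ i := by
    intro u
    have := h u
    unfold YieldsRainbow at this
    push_neg at this
    exact this
  choose m hm using h'
  set j₀ : Fin k := ⟨0, hk⟩ with hj₀
  have hself : ∀ u : V, u ∈ closedNbr G u := fun u => (mem_closedNbr G).mpr (Or.inl rfl)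
  set c' : V → Fin k := fun u => if c u = j₀ then m u else c u with hc'
  apply chrom_aux G hchrom c' _ j₀
  · intro v
    simp only [hc']
    split_ifs with h1
    · exact fun he => hm v v (hself v) (h1 ▸ he ▸ rfl)
    · exact h1
  · intro u v hadj heq
    have hu : u ∈ closedNbr G v := (mem_closedNbr G).mpr (Or.inr (G.adj_symm hadj))
    have hv : v ∈ closedNbr G u := (mem_closedNbr G).mpr (Or.inr hadj)
    simp only [hc'] at heq
    split_ifs at heq with h1 h2 h2
    · exact hproper u v hadj (h1.trans h2.symm)
    · exact hm u v hv heq.symm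
    · exact hm v u hu heq
    · exact hproper u v hadj heq

lemma adj_some_some {i i' : Fin t} {x y : V} :
    (windmill G t).Adj (some (i, x)) (some (i', y)) ↔ i = i' ∧ G.Adj x y := Iff.rfl

lemma adj_some_none {p : Fin t × V} : (windmill G t).Adj (some p) none := trivial

lemma adj_none_some {p : Fin t × V} : (windmill G t).Adj none (some p) := trivial

lemma mem_closedNbr_some {i i' : Fin t} {x y : V} :
    some (i', y) ∈ closedNbr (windmill G t) (some (i, x)) ↔
      i' = i ∧ y ∈ closedNbr G x := by
  rw [mem_closedNbr, mem_closedNbr]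
  simp only [Option.some.injEq, Prod.mk.injEq, adj_some_some]
  constructor
  · rintro (⟨h1, h2⟩ | ⟨h1, h2⟩)
    · exact ⟨h1, Or.inl h2⟩
    · exact ⟨h1.symm, Or.inr h2⟩
  · rintro ⟨h1, h2 | h2⟩
    · exact Or.inl ⟨h1, h2⟩
    · exact Or.inr ⟨h1.symm, h2⟩

lemma none_mem_closedNbr_some {p : Fin t × V} :
    (none : Option (Fin t × V)) ∈ closedNbr (windmill G t) (some p) :=
  (mem_closedNbr _).mpr (Or.inr (adj_some_none G))

lemma mem_closedNbr_none {v : Option (Fin t × V)} :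
    v ∈ closedNbr (windmill G t) none := by
  rcases v with _ | p
  · exact (mem_closedNbr _).mpr (Or.inl rfl)
  · exact (mem_closedNbr _).mpr (Or.inr (adj_none_some G))

lemma rainbow_some_iff {i : Fin t} {x : V} :
    YieldsRainbow (windmill G t) (windmillColour c t) (some (i, x)) ↔
      YieldsRainbow G c x := by
  constructor
  · intro h j
    obtain ⟨v, hv, hcv⟩ := h (Fin.castSucc j)
    rcases v with _ | ⟨i', y⟩
    · exact absurd hcv (Fin.castSucc_lt_last j).ne'
    · obtain ⟨h1, h2⟩ := (mem_closedNbr_some G).mp hv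
      exact ⟨y, h2, Fin.castSucc_injective k hcv⟩
  · intro h j
    refine Fin.lastCases ?_ (fun j' => ?_) j
    · exact ⟨none, none_mem_closedNbr_some G, rfl⟩
    · obtain ⟨y, hy, hcy⟩ := h j'
      exact ⟨some (i, y), (mem_closedNbr_some G).mpr ⟨rfl, hy⟩,
        by simp [windmillColour, hcy]⟩

lemma rainbow_none (hsurj : Function.Surjective c) (ht : 1 ≤ t) :
    YieldsRainbow (windmill G t) (windmillColour c t) (none : Option (Fin t × V)) := by
  intro j
  refine Fin.lastCases ?_ (fun j' => ?_) j
  · exact ⟨none, mem_closedNbr_none G, rfl⟩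
  · obtain ⟨v, hv⟩ := hsurj j'
    exact ⟨some (⟨0, ht⟩, v), mem_closedNbr_none G, by simp [windmillColour, hv]⟩

lemma empty_fade : IsFadeSet G c (∅ : Finset V) := by
  intro u hu i
  obtain ⟨v, hv, hcv⟩ := hu i
  exact ⟨v, hv, hcv, by simp⟩

lemma fade_bdd : BddAbove {m | ∃ F : Finset V, IsFadeSet G c F ∧ F.card = m} := by
  refine ⟨Fintype.card V, fun m hm => ?_⟩
  obtain ⟨F, _, rfl⟩ := hm
  exact F.card_le_univ

lemma fade_nonempty : ({m | ∃ F : Finset V, IsFadeSet G c F ∧ F.card = m} : Set ℕ).Nonempty :=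
  ⟨0, ∅, empty_fade G c, Finset.card_empty⟩

lemma fadingNumber_mem :
    ∃ F : Finset V, IsFadeSet G c F ∧ F.card = fadingNumber G c :=
  Nat.sSup_mem (fade_nonempty G c) (fade_bdd G c)

lemma card_le_fadingNumber {F : Finset V} (hF : IsFadeSet G c F) :
    F.card ≤ fadingNumber G c :=
  le_csSup (fade_bdd G c) ⟨F, hF, rfl⟩

lemma card_decomp (ht : 1 ≤ t) (F : Finset (Option (Fin t × V))) (hnone : none ∉ F) :
    F.card = ∑ i : Fin t,
      (F.preimage (fun v => some (i, v))
        (by intro a _ b _ h; simpa using h)).card := by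
  have hfib := Finset.card_eq_sum_card_fiberwise
    (f := fun v : Option (Fin t × V) => v.elim (⟨0, ht⟩ : Fin t) Prod.fst)
    (s := F) (t := Finset.univ) (fun x _ => Finset.mem_univ _)
  rw [hfib]
  refine Finset.sum_congr rfl fun i _ => ?_
  have himg : F.filter (fun v => v.elim (⟨0, ht⟩ : Fin t) Prod.fst = i)
      = (F.preimage (fun v => some (i, v))
          (by intro a _ b _ h; simpa using h)).image (fun v => some (i, v)) := by
    ext a
    rcases a with _ | ⟨i', x⟩
    · simp [hnone]
    · rw [Finset.mem_filter, Finset.mem_image]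
      simp only [Finset.mem_preimage, Option.elim, Option.some.injEq, Prod.mk.injEq]
      constructor
      · rintro ⟨hmem, rfl⟩
        exact ⟨x, Finset.mem_preimage.mpr hmem, rfl, rfl⟩
      · rintro ⟨v, hv, rfl, rfl⟩
        exact ⟨(Finset.mem_preimage (f := fun v => some (i, v))).mp hv, rfl⟩
  rw [himg, Finset.card_image_of_injective _ (fun a b h => by simpa using h)]

end Aux

theorem stmt_19 {V : Type*} [Fintype V] [DecidableEq V] (G : SimpleGraph V)
    [DecidableRel G.Adj] {k : ℕ} (c : V → Fin k)
    (hproper : ∀ u v : V, G.Adj u v → c u ≠ c v)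
    (hchrom : G.chromaticNumber = k) (t : ℕ) (ht : 1 ≤ t) :
    (∀ F : Finset (Option (Fin t × V)),
      IsFadeSet (windmill G t) (windmillColour c t) F ↔
        (none ∉ F ∧ ∀ i : Fin t,
          IsFadeSet G c (F.preimage (fun v => some (i, v))
            (by intro a _ b _ h; simpa using h)))) ∧
    fadingNumber (windmill G t) (windmillColour c t) = t * fadingNumber G c := by
  have hsurj : Function.Surjective c := c_surj G c hproper hchrom
  have hiff : ∀ F : Finset (Option (Fin t × V)),
      IsFadeSet (windmill G t) (windmillColour c t) F ↔
        (none ∉ F ∧ ∀ i : Fin t,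
          IsFadeSet G c (F.preimage (fun v => some (i, v))
            (by intro a _ b _ h; simpa using h))) := by
    intro F
    constructor
    · intro hF
      constructor
      · obtain ⟨v, hv, hcv, hvF⟩ := hF none (rainbow_none G c hsurj ht) (Fin.last k)
        rcases v with _ | p
        · exact hvF
        · exact absurd hcv (Fin.castSucc_lt_last (c p.2)).ne
      · intro i u hu j
        obtain ⟨v, hv, hcv, hvF⟩ := hF (some (i, u))
          ((rainbow_some_iff G c).mpr hu) (Fin.castSucc j)
        rcases v with _ | ⟨i', y⟩
        · exact absurd hcv (Fin.castSucc_lt_last j).ne'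
        · obtain ⟨h1, h2⟩ := (mem_closedNbr_some G).mp hv
          subst h1
          refine ⟨y, h2, Fin.castSucc_injective k hcv, fun hmem => ?_⟩
          replace hmem := Finset.mem_preimage.mp hmem
          exact hvF hmem
    · rintro ⟨hnone, hfade⟩ u hu j
      rcases u with _ | ⟨i, x⟩
      · refine Fin.lastCases ?_ (fun j' => ?_) j
        · exact ⟨none, mem_closedNbr_none G, rfl, hnone⟩
        · obtain ⟨u₀, hu₀⟩ := exists_rainbow G c hproper hchrom j'.pos
          obtain ⟨y, hy, hcy, hyF⟩ := hfade ⟨0, ht⟩ u₀ hu₀ j'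
          exact ⟨some (⟨0, ht⟩, y), mem_closedNbr_none G,
            by simp [windmillColour, hcy],
            fun hmem => hyF (Finset.mem_preimage.mpr hmem)⟩
      · have hx := (rainbow_some_iff G c).mp hu
        refine Fin.lastCases ?_ (fun j' => ?_) j
        · exact ⟨none, none_mem_closedNbr_some G, rfl, hnone⟩
        · obtain ⟨y, hy, hcy, hyF⟩ := hfade i x hx j'
          exact ⟨some (i, y), (mem_closedNbr_some G).mpr ⟨rfl, hy⟩,
            by simp [windmillColour, hcy],
            fun hmem => hyF (Finset.mem_preimage.mpr hmem)⟩
  refine ⟨hiff, ?_⟩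
  obtain ⟨F₀, hF₀fade, hF₀card⟩ := fadingNumber_mem G c
  refine le_antisymm ?_ ?_
  · refine csSup_le ⟨0, ∅, empty_fade _ _, Finset.card_empty⟩ ?_
    rintro m ⟨F, hF, rfl⟩
    obtain ⟨hnone, hfade⟩ := (hiff F).mp hF
    rw [card_decomp ht F hnone]
    calc ∑ i : Fin t, (F.preimage (fun v => some (i, v))
            (by intro a _ b _ h; simpa using h)).card
        ≤ ∑ _i : Fin t, fadingNumber G c :=
          Finset.sum_le_sum fun i _ => card_le_fadingNumber G c (hfade i)
      _ = t * fadingNumber G c := by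
          rw [Finset.sum_const, Finset.card_univ, Fintype.card_fin, smul_eq_mul]
  · set Fbig : Finset (Option (Fin t × V)) :=
      ((Finset.univ : Finset (Fin t)) ×ˢ F₀).image (fun p => some p) with hFbig
    have hnone : none ∉ Fbig := by simp [hFbig]
    have hpre : ∀ i : Fin t, Fbig.preimage (fun v => some (i, v))
        (by intro a _ b _ h; simpa using h) = F₀ := by
      intro i
      ext x
      simp [hFbig, Finset.mem_preimage]
    have hfade : IsFadeSet (windmill G t) (windmillColour c t) Fbig := by
      rw [hiff]
      exact ⟨hnone, fun i => by rw [hpre i]; exact hF₀fade⟩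
    have hcard : Fbig.card = t * fadingNumber G c := by
      rw [hFbig, Finset.card_image_of_injective _ (Option.some_injective _),
        Finset.card_product, Finset.card_univ, Fintype.card_fin, hF₀card]
    exact le_csSup (fade_bdd _ _) ⟨Fbig, hfade, hcard⟩
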